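/- Let p ≥ 0 and let G be a nearly balanced bipartite graph of order 2n−1 with parts X, Y, |X| = n, |Y| = n−1. If x ∈ X and y ∈ Y are non-adjacent vertices with d_G(x) + d_G(y) ≥ n + p + 1, then G is 2p-Hamilton-biconnected if and only if G + xy is 2p-Hamilton-biconnected. Consequently, G is 2p-Hamilton-biconnected if and only if its (n+p+1)-biclosure is 2p-Hamilton-biconnected. -/

import Mathlib

/-- A nearly balanced bipartite graph `G` with parts `X, Y` (`|X| = |Y| + 1`) is
`2p`-Hamilton-biconnected: for every `W` meeting each part in `p` vertices, the subgraph
induced on the complement of `W` has a Hamiltonian path between any two distinct vertices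
of `X \ W`. -/
def TwoPHamBicNearly {V : Type*} [DecidableEq V] (G : SimpleGraph V) (X Y : Finset V)
    (p : ℕ) : Prop :=
  ∀ W : Finset V, (W ∩ X).card = p → (W ∩ Y).card = p →
    ∀ u ∈ X, ∀ v ∈ X, u ≠ v → ∀ (hu : u ∉ W) (hv : v ∉ W),
      ∃ w : (G.induce {x : V | x ∉ W}).Walk ⟨u, hu⟩ ⟨v, hv⟩, w.IsHamiltonian

/-- One step of the `ℓ`-biclosure procedure on a bipartite graph with parts `X, Y`:
add one edge between non-adjacent `x ∈ X`, `y ∈ Y` with degree sum at least `ℓ`. -/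
def ClosureStep {V : Type*} (X Y : Finset V) (ℓ : ℕ) (G₁ G₂ : SimpleGraph V) : Prop :=
  ∃ x ∈ X, ∃ y ∈ Y, ¬ G₁.Adj x y ∧
    ℓ ≤ (G₁.neighborSet x).ncard + (G₁.neighborSet y).ncard ∧
    G₂ = G₁ ⊔ SimpleGraph.fromEdgeSet {s(x, y)}

/-- `G` is `ℓ`-closed w.r.t. the bipartition `(X, Y)`. -/
def IsClosedBip {V : Type*} (X Y : Finset V) (ℓ : ℕ) (G : SimpleGraph V) : Prop :=
  ∀ x ∈ X, ∀ y ∈ Y, ¬ G.Adj x y →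
    (G.neighborSet x).ncard + (G.neighborSet y).ncard < ℓ

section ProofAux
open List SimpleGraph

def walkOfChain {V : Type*} (G : SimpleGraph V) :
    ∀ (l : List V) (hne : l ≠ []), l.IsChain G.Adj → G.Walk (l.head hne) (l.getLast hne)
  | [a], _, _ => SimpleGraph.Walk.nil
  | a :: b :: l, _, h =>
    (SimpleGraph.Walk.cons (List.isChain_cons_cons.mp h).1
      (walkOfChain G (b :: l) (by simp) (List.isChain_cons_cons.mp h).2)).copy rfl
      (by rw [List.getLast_cons (by simp : (b :: l) ≠ [])])

theorem support_walkOfChain {V : Type*} (G : SimpleGraph V) :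
    ∀ (l : List V) (hne : l ≠ []) (h : l.IsChain G.Adj),
      (walkOfChain G l hne h).support = l
  | [a], _, _ => rfl
  | a :: b :: l, _, h => by
    rw [walkOfChain]
    exact congrArg (a :: ·) (support_walkOfChain G (b :: l) (by simp) (List.isChain_cons_cons.mp h).2)

theorem build_ham {V : Type*} [DecidableEq V] (G : SimpleGraph V) (S : Set V)
    (u v : ↥S) (L : List ↥S) (hnd : L.Nodup) (hcomp : ∀ z, z ∈ L)
    (hch : L.IsChain fun a b => G.Adj a.1 b.1)
    (hh : L.head? = some u) (hg : L.getLast? = some v) :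
    ∃ w : (G.induce S).Walk u v, w.IsHamiltonian := by
  have hne : L ≠ [] := by
    intro h; rw [h] at hh; simp at hh
  have hch' : L.IsChain (G.induce S).Adj := hch
  have e1 : L.head hne = u := by
    rw [List.head?_eq_head hne] at hh
    exact Option.some_inj.mp hh
  have e2 : L.getLast hne = v := by
    rw [List.getLast?_eq_getLast hne] at hg
    exact Option.some_inj.mp hg
  refine ⟨(walkOfChain _ L hne hch').copy e1 e2, ?_⟩
  intro a
  rw [SimpleGraph.Walk.support_copy, support_walkOfChain]
  exact @List.count_eq_one_of_mem _ instBEqOfDecidableEq _ _ _ hnd (hcomp a)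

theorem extract_ham {V : Type*} [DecidableEq V] {G : SimpleGraph V} {S : Set V}
    {u v : ↥S} (w : G.induce S |>.Walk u v) (hw : w.IsHamiltonian) :
    w.support.Nodup ∧ (∀ z, z ∈ w.support) ∧
      w.support.IsChain (fun a b => (G.induce S).Adj a b) ∧
      w.support.head? = some u ∧ w.support.getLast? = some v := by
  refine ⟨(@List.nodup_iff_count_le_one _ instBEqOfDecidableEq _ _).mpr fun a => le_of_eq (hw a),
    fun z => (@List.count_pos_iff _ instBEqOfDecidableEq _ _ _).mp (by rw [hw z]; norm_num),
    w.isChain_adj_support, ?_, ?_⟩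
  · rw [List.head?_eq_head w.support_ne_nil, SimpleGraph.Walk.head_support]
  · rw [List.getLast?_eq_getLast w.support_ne_nil,
      SimpleGraph.Walk.getLast_support]

theorem surgery {α : Type*} {R : α → α → Prop} (hsymm : Symmetric R)
    (L : List α) (s t : ℕ) (hs : 1 ≤ s) (hst : s < t) (ht : t < L.length)
    (hseg : ∀ j (h2 : j + 1 < L.length), j + 1 ≠ s → j + 1 ≠ t →
      R (L[j]'(by omega)) (L[j+1]'h2))
    (hb1 : R (L[s-1]'(by omega)) (L[t-1]'(by omega)))
    (hb2 : R (L[s]'(by omega)) (L[t]'ht)) :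
    ∃ L' : List α, L'.Perm L ∧ L'.IsChain R ∧ L'.head? = L.head? ∧
      L'.getLast? = L.getLast? := by

  set M := (L.drop s).take (t - s) with hM
  have hlenM : M.length = t - s := by
    simp [hM, List.length_take, List.length_drop]; omega
  have hMget : ∀ i (h : i < t - s), M[i]'(by omega) = L[s + i]'(by omega) := by
    intro i h; simp [hM]
  have e1 : (L.take s).getLast? = some (L[s-1]'(by omega)) := by
    rw [List.getLast?_eq_getElem?, List.length_take]
    rw [List.getElem?_take_of_lt (by omega)]
    rw [List.getElem?_eq_getElem (by omega)]
    congr 2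
    omega
  have e2 : M.reverse.head? = some (L[t-1]'(by omega)) := by
    rw [List.head?_reverse, List.getLast?_eq_getElem?, hlenM,
      List.getElem?_eq_getElem (by omega)]
    rw [hMget _ (by omega)]
    congr 2
    omega
  have e3 : M.reverse.getLast? = some (L[s]'(by omega)) := by
    rw [List.getLast?_reverse, List.head?_eq_getElem?,
      List.getElem?_eq_getElem (by omega)]
    rw [hMget 0 (by omega)]; norm_num
  have e4 : (L.drop t).head? = some (L[t]'ht) := by
    rw [List.head?_eq_getElem?, List.getElem?_drop,
      List.getElem?_eq_getElem (by omega)]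
    norm_num
  have c1 : (L.take s).IsChain R := by
    rw [List.isChain_iff_getElem]
    intro i h
    simp only [List.length_take] at h
    simp only [List.get_eq_getElem, List.getElem_take]
    exact hseg i (by omega) (by omega) (by omega)
  have c2 : M.reverse.IsChain R := by
    rw [List.isChain_reverse]
    refine List.IsChain.imp (fun a b h => hsymm h) ?_
    rw [List.isChain_iff_getElem]
    intro i h
    rw [hlenM] at h
    rw [hMget i (by omega), hMget (i+1) (by omega)]
    have := hseg (s + i) (by omega) (by omega) (by omega)
    convert this using 2 <;> omega
  have c3 : (L.drop t).IsChain R := by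
    rw [List.isChain_iff_getElem]
    intro i h
    simp only [List.length_drop] at h
    simp only [List.get_eq_getElem, List.getElem_drop]
    have := hseg (t + i) (by omega) (by omega) (by omega)
    convert this using 2 <;> omega
  have hch : (L.take s ++ (M.reverse ++ L.drop t)).IsChain R := by
    refine List.IsChain.append c1 (List.IsChain.append c2 c3 ?_) ?_
    · intro a ha b hb
      rw [e3] at ha; rw [e4] at hb
      simp only [Option.mem_def, Option.some_inj] at ha hb
      subst ha; subst hb; exact hb2
    · intro a ha b hb
      rw [e1] at ha
      rw [List.head?_append, e2] at hb
      simp only [Option.or_some, Option.some_or, Option.mem_def, Option.some_inj] at ha hb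
      subst ha; subst hb; exact hb1
  have hhd : (L.take s ++ (M.reverse ++ L.drop t)).head? = L.head? := by
    rw [List.head?_append]
    have : (L.take s).head? = L.head? := by
      rw [List.head?_eq_getElem?, List.head?_eq_getElem?, List.getElem?_take_of_lt (by omega)]
    rw [this, List.head?_eq_getElem?, List.getElem?_eq_getElem (by omega)]
    rfl
  have hgl : (L.take s ++ (M.reverse ++ L.drop t)).getLast? = L.getLast? := by
    rw [List.getLast?_append, List.getLast?_append]
    have : (L.drop t).getLast? = L.getLast? := by
      rw [List.getLast?_eq_getElem?, List.getLast?_eq_getElem?, List.getElem?_drop,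
        List.length_drop]
      congr 1
      omega
    rw [this, List.getLast?_eq_getElem?, List.getElem?_eq_getElem (by omega)]
    rfl
  have hperm : (L.take s ++ (M.reverse ++ L.drop t)).Perm L := by
    have hsplit : L = L.take s ++ (M ++ L.drop t) := by
      rw [hM]
      have h1 : (L.drop s).take (t - s) ++ (L.drop s).drop (t - s) = L.drop s :=
        List.take_append_drop _ _
      have h2 : (L.drop s).drop (t - s) = L.drop t := by
        rw [List.drop_drop]; congr 1; omega
      rw [h2] at h1
      rw [h1, List.take_append_drop]
    conv_rhs => rw [hsplit]
    exact List.Perm.append_left _ (List.Perm.append_right _ (List.reverse_perm M))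
  exact ⟨L.take s ++ (M.reverse ++ L.drop t), hperm, hch, hhd, hgl⟩

theorem core2 {V : Type*} [Fintype V] [DecidableEq V] {n p : ℕ}
    {G : SimpleGraph V} [DecidableRel G.Adj] {X Y : Finset V}
    (hdisj : Disjoint X Y)
    (hY : Y.card = n - 1) (hn : 1 ≤ n)
    (hbip : ∀ u v, G.Adj u v → (u ∈ X ∧ v ∈ Y) ∨ (u ∈ Y ∧ v ∈ X))
    {x y : V} (hx : x ∈ X) (hy : y ∈ Y) (hxy : ¬ G.Adj x y)
    (hdeg : n + p + 1 ≤ G.degree x + G.degree y)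
    {W : Finset V} (hWX : (W ∩ X).card = p) (hWY : (W ∩ Y).card = p)
    (L : List ↥{z : V | z ∉ W}) (hnd : L.Nodup) (hcomp : ∀ z, z ∈ L)
    (hS : L.IsChain (fun a b => G.Adj a.1 b.1 ∨ (a.1 = x ∧ b.1 = y) ∨ (a.1 = y ∧ b.1 = x)))
    {k : ℕ} (hk : k + 1 < L.length)
    (hkx : (L[k]'(by omega)).1 = x) (hky : (L[k+1]'hk).1 = y)
    (hhead : (L[0]'(by omega)).1 ∈ X) (hlast : (L[L.length-1]'(by omega)).1 ∈ X) :
    ∃ L' : List ↥{z : V | z ∉ W}, L'.Nodup ∧ (∀ z, z ∈ L') ∧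
      L'.IsChain (fun a b => G.Adj a.1 b.1) ∧ L'.head? = L.head? ∧
      L'.getLast? = L.getLast? := by
  have hm0 : 0 < L.length := by omega
  -- every non-k consecutive pair is a G-edge
  have hGchain : ∀ j (h : j + 1 < L.length), j ≠ k →
      G.Adj (L[j]'(by omega)).1 (L[j+1]'h).1 := by
    intro j h hjk
    have hS' := List.isChain_iff_getElem.mp hS j (by omega)
    rcases hS' with h1 | ⟨h2, h3⟩ | ⟨h4, h5⟩
    · exact h1
    · exfalso
      apply hjk
      have : (L[j]'(by omega)) = (L[k]'(by omega)) := Subtype.ext (by rw [h2, hkx])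
      exact (hnd.getElem_inj_iff).mp this
    · exfalso
      have e1 : j + 1 = k := by
        have : (L[j+1]'h) = (L[k]'(by omega)) := Subtype.ext (by rw [h5, hkx])
        exact (hnd.getElem_inj_iff).mp this
      have e2 : j = k + 1 := by
        have : (L[j]'(by omega)) = (L[k+1]'hk) := Subtype.ext (by rw [h4, hky])
        exact (hnd.getElem_inj_iff).mp this
      omega
  set d := L[0]'hm0 with hd
  set f : ℕ → V := fun i => (L.getD i d).1 with hfdef
  have hf : ∀ i (h : i < L.length), f i = (L[i]'h).1 := by
    intro i h
    simp only [hfdef]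
    rw [List.getD_eq_getElem?_getD, List.getElem?_eq_getElem h, Option.getD_some]
  set A := (Finset.range (L.length - 1)).filter (fun i => G.Adj x (f i)) with hA
  set B := (Finset.range (L.length - 1)).filter (fun i => G.Adj y (f (i+1))) with hB
  have hxW : x ∉ W := by rw [← hkx]; exact (L[k]'(by omega)).2
  have hyW : y ∉ W := by rw [← hky]; exact (L[k+1]'hk).2
  -- index of a vertex not in W
  have hidx : ∀ z : V, (hzW : z ∉ W) → ∃ (j : ℕ) (h : j < L.length), (L[j]'h).1 = z := by
    intro z hzW
    obtain ⟨j, h, hj⟩ := List.mem_iff_getElem.mp (hcomp ⟨z, hzW⟩)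
    exact ⟨j, h, by rw [hj]⟩
  -- degree bound for x
  have hdx : G.degree x ≤ A.card + p := by
    have hsub : G.neighborFinset x ⊆ (W ∩ Y) ∪ A.image f := by
      intro z hz
      rw [SimpleGraph.mem_neighborFinset] at hz
      have hzY : z ∈ Y := by
        rcases hbip x z hz with ⟨_, h⟩ | ⟨h, _⟩
        · exact h
        · exact absurd hx (Finset.disjoint_right.mp hdisj h)
      rw [Finset.mem_union]
      by_cases hzW : z ∈ W
      · exact Or.inl (Finset.mem_inter.mpr ⟨hzW, hzY⟩)
      · right
        obtain ⟨j, h, hj⟩ := hidx z hzW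
        have hjlt : j < L.length - 1 := by
          rcases Nat.lt_or_ge j (L.length - 1) with h' | h'
          · exact h'
          · exfalso
            have : j = L.length - 1 := by omega
            subst this
            rw [hj] at hlast
            exact Finset.disjoint_left.mp hdisj hlast hzY
        refine Finset.mem_image.mpr ⟨j, ?_, by rw [hf j h, hj]⟩
        rw [hA, Finset.mem_filter, Finset.mem_range]
        exact ⟨hjlt, by rw [hf j h, hj]; exact hz⟩
    calc G.degree x = (G.neighborFinset x).card := rfl
      _ ≤ ((W ∩ Y) ∪ A.image f).card := Finset.card_le_card hsub
      _ ≤ (W ∩ Y).card + (A.image f).card := Finset.card_union_le _ _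
      _ ≤ p + A.card := by
          rw [hWY]
          exact Nat.add_le_add le_rfl Finset.card_image_le
      _ = A.card + p := by omega
  -- degree bound for y
  have hdy : G.degree y ≤ B.card + (p + 1) := by
    have hsub : G.neighborFinset y ⊆ (W ∩ X) ∪ insert (f 0) (B.image fun i => f (i+1)) := by
      intro z hz
      rw [SimpleGraph.mem_neighborFinset] at hz
      have hzX : z ∈ X := by
        rcases hbip y z hz with ⟨h, _⟩ | ⟨_, h⟩
        · exact absurd hy (Finset.disjoint_left.mp hdisj h)
        · exact h
      rw [Finset.mem_union]
      by_cases hzW : z ∈ W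
      · exact Or.inl (Finset.mem_inter.mpr ⟨hzW, hzX⟩)
      · right
        obtain ⟨j, h, hj⟩ := hidx z hzW
        rw [Finset.mem_insert]
        rcases Nat.eq_zero_or_pos j with h0 | h0
        · subst h0
          exact Or.inl (by rw [hf 0 h, hj])
        · right
          refine Finset.mem_image.mpr ⟨j - 1, ?_, ?_⟩
          · rw [hB, Finset.mem_filter, Finset.mem_range]
            constructor
            · omega
            · have : j - 1 + 1 = j := by omega
              rw [this, hf j h, hj]
              exact hz
          · have : j - 1 + 1 = j := by omega
            rw [this, hf j h, hj]
    calc G.degree y = (G.neighborFinset y).card := rfl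
      _ ≤ ((W ∩ X) ∪ insert (f 0) (B.image fun i => f (i+1))).card :=
          Finset.card_le_card hsub
      _ ≤ (W ∩ X).card + (insert (f 0) (B.image fun i => f (i+1))).card :=
          Finset.card_union_le _ _
      _ ≤ p + ((B.image fun i => f (i+1)).card + 1) := by
          rw [hWX]
          exact Nat.add_le_add le_rfl (Finset.card_insert_le _ _)
      _ ≤ p + (B.card + 1) := by
          exact Nat.add_le_add le_rfl (Nat.add_le_add Finset.card_image_le le_rfl)
      _ = B.card + (p + 1) := by omega
  -- union bound
  have hUB : (A ∪ B).card + p ≤ n - 1 := by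
    have hmaps : ∀ i ∈ A ∪ B, f i ∈ Y \ W := by
      intro i hi
      have hilt : i < L.length - 1 := by
        rcases Finset.mem_union.mp hi with h | h
        · exact Finset.mem_range.mp (Finset.mem_filter.mp h).1
        · exact Finset.mem_range.mp (Finset.mem_filter.mp h).1
      have hiY : f i ∈ Y := by
        rcases Finset.mem_union.mp hi with h | h
        · have hadj := (Finset.mem_filter.mp h).2
          rcases hbip x (f i) hadj with ⟨_, h'⟩ | ⟨h', _⟩
          · exact h'
          · exact absurd hx (Finset.disjoint_right.mp hdisj h')
        · have hadj := (Finset.mem_filter.mp h).2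
          have hik : i ≠ k := by
            intro he
            subst he
            rw [hf (i+1) (by omega), hky] at hadj
            exact G.irrefl hadj
          have hX1 : f (i+1) ∈ X := by
            rcases hbip y (f (i+1)) hadj with ⟨h', _⟩ | ⟨_, h'⟩
            · exact absurd hy (Finset.disjoint_left.mp hdisj h')
            · exact h'
          have hadj2 : G.Adj (f i) (f (i+1)) := by
            rw [hf i (by omega), hf (i+1) (by omega)]
            exact hGchain i (by omega) hik
          rcases hbip (f i) (f (i+1)) hadj2 with ⟨_, h'⟩ | ⟨h', _⟩
          · exact absurd hX1 (Finset.disjoint_right.mp hdisj h')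
          · exact h'
      have hiW : f i ∉ W := by
        rw [hf i (by omega)]
        exact (L[i]'(by omega)).2
      exact Finset.mem_sdiff.mpr ⟨hiY, hiW⟩
    have hinj : Set.InjOn f ↑(A ∪ B) := by
      intro i hi i' hi' he
      simp only [Finset.coe_union, Set.mem_union, Finset.mem_coe] at hi hi'
      have hilt : i < L.length - 1 := by
        rcases hi with h | h <;>
          exact Finset.mem_range.mp (Finset.mem_filter.mp h).1
      have hilt' : i' < L.length - 1 := by
        rcases hi' with h | h <;>
          exact Finset.mem_range.mp (Finset.mem_filter.mp h).1
      rw [hf i (by omega), hf i' (by omega)] at he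
      exact (hnd.getElem_inj_iff).mp (Subtype.ext he)
    have hcardle : (A ∪ B).card ≤ (Y \ W).card :=
      Finset.card_le_card_of_injOn f hmaps hinj
    have hsd : (Y \ W).card + (Y ∩ W).card = Y.card := Finset.card_sdiff_add_card_inter _ _
    have hWY' : (Y ∩ W).card = p := by rw [Finset.inter_comm]; exact hWY
    omega
  -- find a good index
  have hABne : (A ∩ B).Nonempty := by
    by_contra hno
    rw [Finset.not_nonempty_iff_eq_empty] at hno
    have hdis : Disjoint A B := Finset.disjoint_iff_inter_eq_empty.mpr hno
    have hcu : (A ∪ B).card = A.card + B.card := Finset.card_union_of_disjoint hdis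
    omega
  obtain ⟨i, hi⟩ := hABne
  have hiA : G.Adj x (f i) := (Finset.mem_filter.mp (Finset.mem_inter.mp hi).1).2
  have hiB : G.Adj y (f (i+1)) := (Finset.mem_filter.mp (Finset.mem_inter.mp hi).2).2
  have hilt : i < L.length - 1 :=
    Finset.mem_range.mp (Finset.mem_filter.mp (Finset.mem_inter.mp hi).1).1
  have hik : i ≠ k := by
    intro he
    have hfx : f i = x := by rw [he, hf k (by omega), hkx]
    rw [hfx] at hiA
    exact G.irrefl hiA
  have hik1 : i ≠ k + 1 := by
    intro he
    have hfy : f i = y := by rw [he, hf (k+1) hk, hky]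
    rw [hfy] at hiA
    exact hxy hiA
  have hi1k : i + 1 ≠ k := by
    intro he
    have hfx : f (i+1) = x := by rw [he, hf k (by omega), hkx]
    rw [hfx] at hiB
    exact hxy hiB.symm
  -- surgery
  have hsymm : Symmetric (fun a b : ↥{z : V | z ∉ W} => G.Adj a.1 b.1) :=
    fun a b h => h.symm
  have happly : ∀ s t : ℕ, ∀ (hs : 1 ≤ s) (hst : s < t) (ht : t < L.length),
      (∀ j (h2 : j + 1 < L.length), j + 1 ≠ s → j + 1 ≠ t → j ≠ k) →
      G.Adj (L[s-1]'(by omega)).1 (L[t-1]'(by omega)).1 →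
      G.Adj (L[s]'(by omega)).1 (L[t]'(by omega)).1 →
      ∃ L' : List ↥{z : V | z ∉ W}, L'.Nodup ∧ (∀ z, z ∈ L') ∧
        L'.IsChain (fun a b => G.Adj a.1 b.1) ∧ L'.head? = L.head? ∧
        L'.getLast? = L.getLast? := by
    intro s t hs hst ht hex hb1 hb2
    obtain ⟨L', hperm, hch, hh, hg⟩ := surgery hsymm L s t hs hst ht
      (fun j h2 hjs hjt => hGchain j h2 (hex j h2 hjs hjt)) hb1 hb2
    exact ⟨L', (hperm.nodup_iff).mpr hnd, fun z => (hperm.mem_iff).mpr (hcomp z),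
      hch, hh, hg⟩
  rcases Nat.lt_or_ge i k with hcase | hcase
  · -- i < k : s = i+1, t = k+1
    have hi1k' : i + 1 < k := by omega
    refine happly (i+1) (k+1) (by omega) (by omega) (by omega) ?_ ?_ ?_
    · intro j h2 hjs hjt; omega
    · have e1 : i + 1 - 1 = i := by omega
      have e2 : k + 1 - 1 = k := by omega
      rw [show (L[i+1-1]'(by omega) : ↥{z : V | z ∉ W}) = L[i]'(by omega) by congr 1,
        show (L[k+1-1]'(by omega) : ↥{z : V | z ∉ W}) = L[k]'(by omega) by congr 1]
      rw [hkx, ← hf i (by omega)]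
      exact hiA.symm
    · rw [hky, ← hf (i+1) (by omega)]
      exact hiB.symm
  · -- i > k (i ≥ k+2) : s = k+1, t = i+1
    have hcase' : k + 2 ≤ i := by omega
    refine happly (k+1) (i+1) (by omega) (by omega) (by omega) ?_ ?_ ?_
    · intro j h2 hjs hjt; omega
    · rw [show (L[k+1-1]'(by omega) : ↥{z : V | z ∉ W}) = L[k]'(by omega) by congr 1,
        show (L[i+1-1]'(by omega) : ↥{z : V | z ∉ W}) = L[i]'(by omega) by congr 1]
      rw [hkx, ← hf i (by omega)]
      exact hiA
    · rw [hky, ← hf (i+1) (by omega)]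
      exact hiB

theorem core {V : Type*} [Fintype V] [DecidableEq V] {n p : ℕ}
    {G : SimpleGraph V} [DecidableRel G.Adj] {X Y : Finset V}
    (hdisj : Disjoint X Y)
    (hY : Y.card = n - 1) (hn : 1 ≤ n)
    (hbip : ∀ u v, G.Adj u v → (u ∈ X ∧ v ∈ Y) ∨ (u ∈ Y ∧ v ∈ X))
    {x y : V} (hx : x ∈ X) (hy : y ∈ Y) (hxy : ¬ G.Adj x y)
    (hdeg : n + p + 1 ≤ G.degree x + G.degree y)
    {W : Finset V} (hWX : (W ∩ X).card = p) (hWY : (W ∩ Y).card = p)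
    (L : List ↥{z : V | z ∉ W}) (hnd : L.Nodup) (hcomp : ∀ z, z ∈ L)
    (hS : L.IsChain (fun a b => G.Adj a.1 b.1 ∨ (a.1 = x ∧ b.1 = y) ∨ (a.1 = y ∧ b.1 = x)))
    (hne : 0 < L.length)
    (hhead : (L[0]'hne).1 ∈ X) (hlast : (L[L.length-1]'(by omega)).1 ∈ X) :
    ∃ L' : List ↥{z : V | z ∉ W}, L'.Nodup ∧ (∀ z, z ∈ L') ∧
      L'.IsChain (fun a b => G.Adj a.1 b.1) ∧ L'.head? = L.head? ∧
      L'.getLast? = L.getLast? := by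
  classical
  by_cases hC : L.IsChain (fun a b => G.Adj a.1 b.1)
  · exact ⟨L, hnd, hcomp, hC, rfl, rfl⟩
  rw [List.isChain_iff_getElem] at hC
  push_neg at hC
  obtain ⟨k, hklt, hbad⟩ := hC
  have hk : k + 1 < L.length := by omega
  have hSk := List.isChain_iff_getElem.mp hS k hklt
  rcases hSk with h1 | ⟨h2, h3⟩ | ⟨h4, h5⟩
  · exact absurd h1 hbad
  · exact core2 hdisj hY hn hbip hx hy hxy hdeg hWX hWY L hnd hcomp hS hk h2 h3 hhead hlast
  · -- reversed edge: work with L.reverse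
    set M := L.reverse with hM
    have hMlen : M.length = L.length := by simp [hM]
    have hMget : ∀ j (h : j < M.length), M[j]'h = L[L.length - 1 - j]'(by omega) := by
      intro j h
      simp [hM]
    have hMnd : M.Nodup := by simp [hM, hnd]
    have hMcomp : ∀ z, z ∈ M := fun z => by simp [hM, hcomp z]
    have hMS : M.IsChain (fun a b => G.Adj a.1 b.1 ∨ (a.1 = x ∧ b.1 = y) ∨ (a.1 = y ∧ b.1 = x)) := by
      rw [hM, List.isChain_reverse]
      refine List.IsChain.imp ?_ hS
      intro a b hab
      rcases hab with h | ⟨ha, hb⟩ | ⟨ha, hb⟩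
      · exact Or.inl h.symm
      · exact Or.inr (Or.inr ⟨hb, ha⟩)
      · exact Or.inr (Or.inl ⟨hb, ha⟩)
    have hk' : (L.length - (k+2)) + 1 < M.length := by omega
    have hkx' : (M[L.length - (k+2)]'(by omega)).1 = x := by
      rw [hMget _ (by omega)]
      have : L.length - 1 - (L.length - (k+2)) = k + 1 := by omega
      simp_rw [this]
      exact h5
    have hky' : (M[(L.length - (k+2)) + 1]'hk').1 = y := by
      rw [hMget _ (by omega)]
      have : L.length - 1 - ((L.length - (k+2)) + 1) = k := by omega
      simp_rw [this]
      exact h4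
    have hMhead : (M[0]'(by omega)).1 ∈ X := by
      rw [hMget 0 (by omega)]
      simpa using hlast
    have hMlast : (M[M.length - 1]'(by omega)).1 ∈ X := by
      rw [hMget _ (by omega)]
      have : L.length - 1 - (M.length - 1) = 0 := by omega
      simp_rw [this]
      exact hhead
    obtain ⟨L'', hnd'', hcomp'', hch'', hh'', hg''⟩ :=
      core2 hdisj hY hn hbip hx hy hxy hdeg hWX hWY M hMnd hMcomp hMS hk' hkx' hky'
        hMhead hMlast
    refine ⟨L''.reverse, by simp [hnd''], fun z => by simp [hcomp'' z], ?_, ?_, ?_⟩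
    · rw [List.isChain_reverse]
      exact List.IsChain.imp (fun a b h => h.symm) hch''
    · rw [List.head?_reverse, hg'', hM, List.getLast?_reverse]
    · rw [List.getLast?_reverse, hh'', hM, List.head?_reverse]

theorem step_iff {V : Type*} [Fintype V] [DecidableEq V] {n p : ℕ}
    (G : SimpleGraph V) [DecidableRel G.Adj] (X Y : Finset V)
    (hdisj : Disjoint X Y)
    (hY : Y.card = n - 1) (hn : 1 ≤ n)
    (hbip : ∀ u v, G.Adj u v → (u ∈ X ∧ v ∈ Y) ∨ (u ∈ Y ∧ v ∈ X))
    {x y : V} (hx : x ∈ X) (hy : y ∈ Y) (hxy : ¬ G.Adj x y)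
    (hdeg : n + p + 1 ≤ G.degree x + G.degree y) :
    (TwoPHamBicNearly G X Y p ↔
      TwoPHamBicNearly (G ⊔ SimpleGraph.fromEdgeSet {s(x, y)}) X Y p) := by
  constructor
  · intro h2p W hWX hWY u hu v hv huv huW hvW
    obtain ⟨w, hw⟩ := h2p W hWX hWY u hu v hv huv huW hvW
    obtain ⟨hnd, hcomp, hch, hh, hg⟩ := extract_ham w hw
    refine build_ham _ _ _ _ w.support hnd hcomp ?_ hh hg
    exact List.IsChain.imp (fun a b hab => Or.inl hab) hch
  · intro h2p W hWX hWY u hu v hv huv huW hvW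
    obtain ⟨w, hw⟩ := h2p W hWX hWY u hu v hv huv huW hvW
    obtain ⟨hnd, hcomp, hch, hh, hg⟩ := extract_ham w hw
    set L := w.support with hL
    have hS : L.IsChain (fun a b => G.Adj a.1 b.1 ∨ (a.1 = x ∧ b.1 = y) ∨
        (a.1 = y ∧ b.1 = x)) := by
      refine List.IsChain.imp ?_ hch
      intro a b hab
      rcases hab with hab | hab
      · exact Or.inl hab
      · rw [SimpleGraph.fromEdgeSet_adj, Set.mem_singleton_iff, Sym2.eq_iff] at hab
        rcases hab.1 with ⟨h1, h2⟩ | ⟨h1, h2⟩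
        · exact Or.inr (Or.inl ⟨h1, h2⟩)
        · exact Or.inr (Or.inr ⟨h1, h2⟩)
    have hlen : 0 < L.length := by
      rw [hL]; exact List.length_pos_iff.mpr w.support_ne_nil
    have h0 : L[0]'hlen = ⟨u, huW⟩ := by
      have := hh
      rw [List.head?_eq_getElem?, List.getElem?_eq_getElem hlen] at this
      exact Option.some_inj.mp this
    have hE : L[L.length - 1]'(by omega) = ⟨v, hvW⟩ := by
      have := hg
      rw [List.getLast?_eq_getElem?, List.getElem?_eq_getElem (by omega)] at this
      exact Option.some_inj.mp this
    have hhead : (L[0]'hlen).1 ∈ X := by rw [h0]; exact hu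
    have hlast : (L[L.length - 1]'(by omega)).1 ∈ X := by rw [hE]; exact hv
    obtain ⟨L', hnd', hcomp', hch', hh', hg'⟩ :=
      core hdisj hY hn hbip hx hy hxy hdeg hWX hWY L hnd hcomp hS hlen hhead hlast
    refine build_ham _ _ _ _ L' hnd' hcomp' hch' ?_ ?_
    · rw [hh', hh]
    · rw [hg', hg]

lemma ncard_neighborSet_eq_degree' {V : Type*} [Fintype V] (G : SimpleGraph V)
    [DecidableRel G.Adj] (v : V) : (G.neighborSet v).ncard = G.degree v := by
  rw [Set.ncard_eq_toFinset_card']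
  rfl


end ProofAux

/-- Lemma 2.6 / biclosure lemma for nearly balanced bipartite graphs. -/
theorem stmt12 {V : Type*} [Fintype V] [DecidableEq V] (n p : ℕ)
    (G : SimpleGraph V) [DecidableRel G.Adj] (X Y : Finset V)
    (hdisj : Disjoint X Y) (hcov : X ∪ Y = Finset.univ)
    (hX : X.card = n) (hY : Y.card = n - 1) (hn : 1 ≤ n)
    (hbip : ∀ u v, G.Adj u v → (u ∈ X ∧ v ∈ Y) ∨ (u ∈ Y ∧ v ∈ X)) :
    (∀ x ∈ X, ∀ y ∈ Y, ¬ G.Adj x y → n + p + 1 ≤ G.degree x + G.degree y →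
      (TwoPHamBicNearly G X Y p ↔
        TwoPHamBicNearly (G ⊔ SimpleGraph.fromEdgeSet {s(x, y)}) X Y p)) ∧
    (∀ H : SimpleGraph V, Relation.ReflTransGen (ClosureStep X Y (n + p + 1)) G H →
      IsClosedBip X Y (n + p + 1) H →
      (TwoPHamBicNearly G X Y p ↔ TwoPHamBicNearly H X Y p)) := by
  classical
  constructor
  · intro x hx y hy hxy hdeg
    exact step_iff G X Y hdisj hY hn hbip hx hy hxy hdeg
  · intro H hRT hclosed
    clear hclosed
    suffices h : (∀ u v, H.Adj u v → (u ∈ X ∧ v ∈ Y) ∨ (u ∈ Y ∧ v ∈ X)) ∧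
        (TwoPHamBicNearly G X Y p ↔ TwoPHamBicNearly H X Y p) from h.2
    induction hRT with
    | refl => exact ⟨hbip, Iff.rfl⟩
    | @tail b c hab hbc ih =>
      obtain ⟨hbipb, hiffb⟩ := ih
      obtain ⟨x, hx, y, hy, hxy, hdeg, rfl⟩ := hbc
      letI : DecidableRel b.Adj := Classical.decRel _
      have hdeg' : n + p + 1 ≤ b.degree x + b.degree y := by
        rwa [ncard_neighborSet_eq_degree', ncard_neighborSet_eq_degree'] at hdeg
      have hbipc : ∀ u v, (b ⊔ SimpleGraph.fromEdgeSet {s(x, y)}).Adj u v →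
          (u ∈ X ∧ v ∈ Y) ∨ (u ∈ Y ∧ v ∈ X) := by
        intro u v huv
        rcases huv with huv | huv
        · exact hbipb u v huv
        · rw [SimpleGraph.fromEdgeSet_adj, Set.mem_singleton_iff, Sym2.eq_iff] at huv
          rcases huv.1 with ⟨h1, h2⟩ | ⟨h1, h2⟩
          · subst h1; subst h2; exact Or.inl ⟨hx, hy⟩
          · subst h1; subst h2; exact Or.inr ⟨hy, hx⟩
      exact ⟨hbipc, hiffb.trans (step_iff b X Y hdisj hY hn hbipb hx hy hxy hdeg')⟩
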